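/- The assignment of Fermi ellipsoids to centered generalized coherent states is injective: if X, Y, X′, Y′ are real symmetric n×n matrices with X, X′ positive definite and Ω_{XY} = Ω_{X′Y′} as subsets of ℝ^{2n}, then X = X′ and Y = Y′. Consequently the map ψ_{X,Y} ↦ Ω_{XY} is a bijection between centered generalized coherent states and Fermi ellipsoids. -/

import Mathlib

open Matrix

/-- The generalized (centered) coherent state
`ψ_{X,Y}(x) = (det X/(πℏ)ⁿ)^{1/4} exp(−(1/2ℏ)(X+iY)x·x)`. -/
noncomputable def gaussianState (n : ℕ) (ℏ : ℝ) (X Y : Matrix (Fin n) (Fin n) ℝ)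
    (x : Fin n → ℝ) : ℂ :=
  (((X.det / (Real.pi * ℏ) ^ n) ^ ((1 : ℝ) / 4) : ℝ) : ℂ) *
    Complex.exp (-(1 / (2 * (ℏ : ℂ))) *
      ∑ j, ∑ k, ((X j k : ℂ) + Complex.I * (Y j k : ℂ)) * (x j : ℂ) * (x k : ℂ))

/-- The Fermi matrix `M_{XY} = [[X² + Y², Y],[Y, I]]`. -/
def fermiMatrix {n : ℕ} (X Y : Matrix (Fin n) (Fin n) ℝ) :
    Matrix (Fin n ⊕ Fin n) (Fin n ⊕ Fin n) ℝ :=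
  fromBlocks (X * X + Y * Y) Y Y 1

/-- The Fermi ellipsoid `Ω_{XY} = {z : M_{XY} z·z ≤ ℏ Tr X}`. -/
def fermiEllipsoid (n : ℕ) (ℏ : ℝ) (X Y : Matrix (Fin n) (Fin n) ℝ) :
    Set (Fin n ⊕ Fin n → ℝ) :=
  {z | z ⬝ᵥ (fermiMatrix X Y).mulVec z ≤ ℏ * X.trace}


lemma symm_ext {ι : Type*} [Fintype ι] [DecidableEq ι] {A B : Matrix ι ι ℝ}
    (hA : A.IsSymm) (hB : B.IsSymm)
    (h : ∀ z, z ⬝ᵥ A *ᵥ z = z ⬝ᵥ B *ᵥ z) : A = B := by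
  ext i j
  have key : ∀ M : Matrix ι ι ℝ, ∀ i j : ι,
      ((Pi.single i 1 + Pi.single j 1 : ι → ℝ) ⬝ᵥ M *ᵥ (Pi.single i 1 + Pi.single j 1))
        = M i i + M i j + (M j i + M j j) := by
    intro M i j
    simp [mulVec_add, dotProduct_add, add_dotProduct, single_dotProduct, mulVec_single]
    ring
  have h1 := h (Pi.single i 1 + Pi.single j 1)
  have h2 := h (Pi.single i 1)
  have h3 := h (Pi.single j 1)
  rw [key, key] at h1
  simp [single_dotProduct, mulVec_single] at h2 h3
  have hAij := hA.apply j i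
  have hBij := hB.apply j i
  -- hA.apply j i : A i j = A j i  (check direction)
  linarith [hA.apply i j, hB.apply i j]

lemma fermi_quad {n : ℕ} {X Y : Matrix (Fin n) (Fin n) ℝ}
    (hX : X.IsSymm) (hY : Y.IsSymm) (z : Fin n ⊕ Fin n → ℝ) :
    z ⬝ᵥ (fromBlocks (X * X + Y * Y) Y Y 1) *ᵥ z
      = (X *ᵥ (z ∘ Sum.inl)) ⬝ᵥ (X *ᵥ (z ∘ Sum.inl))
        + (Y *ᵥ (z ∘ Sum.inl) + z ∘ Sum.inr) ⬝ᵥ (Y *ᵥ (z ∘ Sum.inl) + z ∘ Sum.inr) := by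
  set u := z ∘ Sum.inl
  set v := z ∘ Sum.inr
  have hz : z = Sum.elim u v := by ext i; cases i <;> rfl
  have hsymm : ∀ (A : Matrix (Fin n) (Fin n) ℝ), A.IsSymm → ∀ w w' : Fin n → ℝ,
      w ⬝ᵥ A *ᵥ w' = (A *ᵥ w) ⬝ᵥ w' := by
    intro A hA w w'
    rw [dotProduct_mulVec, ← mulVec_transpose, hA.eq]
  rw [hz, fromBlocks_mulVec, sumElim_dotProduct_sumElim]
  simp only [Sum.elim_comp_inl, Sum.elim_comp_inr]
  simp only [add_mulVec, mulVec_add, dotProduct_add, add_dotProduct, one_mulVec,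
    ← mulVec_mulVec]
  rw [hsymm X hX u (X *ᵥ u), hsymm Y hY u (Y *ᵥ u)]
  have h1 : u ⬝ᵥ Y *ᵥ v = Y *ᵥ u ⬝ᵥ v := hsymm Y hY u v
  have h2 : v ⬝ᵥ Y *ᵥ u = Y *ᵥ u ⬝ᵥ v := dotProduct_comm _ _
  rw [h1, h2]
  ring


lemma dp_nonneg {ι : Type*} [Fintype ι] (v : ι → ℝ) : 0 ≤ v ⬝ᵥ v :=
  Finset.sum_nonneg fun i _ => mul_self_nonneg _

lemma fermi_quad_pos {n : ℕ} {X Y : Matrix (Fin n) (Fin n) ℝ}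
    (hXs : X.IsSymm) (hYs : Y.IsSymm) (hX : X.PosDef)
    {z : Fin n ⊕ Fin n → ℝ} (hz : z ≠ 0) :
    0 < z ⬝ᵥ (fromBlocks (X * X + Y * Y) Y Y 1) *ᵥ z := by
  rw [fermi_quad hXs hYs]
  have ha := dp_nonneg (X *ᵥ (z ∘ Sum.inl))
  have hb := dp_nonneg (Y *ᵥ (z ∘ Sum.inl) + z ∘ Sum.inr)
  rcases eq_or_ne (z ∘ Sum.inl) 0 with h0 | h0
  · have hvne : z ∘ Sum.inr ≠ 0 := by
      intro hv0
      apply hz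
      ext i
      cases i with
      | inl i => exact congrFun h0 i
      | inr i => exact congrFun hv0 i
    have hbv : Y *ᵥ (z ∘ Sum.inl) + z ∘ Sum.inr = z ∘ Sum.inr := by
      rw [h0, mulVec_zero, zero_add]
    rw [hbv] at hb ⊢
    rcases (dp_nonneg (z ∘ Sum.inr)).lt_or_eq with h | h
    · linarith
    · exact absurd (dotProduct_self_eq_zero.mp h.symm) hvne
  · have h1 : 0 < (z ∘ Sum.inl) ⬝ᵥ X *ᵥ (z ∘ Sum.inl) := by
      simpa using hX.dotProduct_mulVec_pos h0
    have hane : X *ᵥ (z ∘ Sum.inl) ≠ 0 := by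
      intro h
      rw [h, dotProduct_zero] at h1
      exact lt_irrefl 0 h1
    rcases ha.lt_or_eq with h | h
    · linarith
    · exact absurd (dotProduct_self_eq_zero.mp h.symm) hane

lemma trace_pos {n : ℕ} (hn : 1 ≤ n) {X : Matrix (Fin n) (Fin n) ℝ} (hX : X.PosDef) :
    0 < X.trace := by
  have : ∀ i : Fin n, 0 < X i i := by
    intro i
    have hsing : (Pi.single i 1 : Fin n → ℝ) ≠ 0 := by
      intro h
      have := congrFun h i
      simp at this
    have := hX.dotProduct_mulVec_pos hsing
    simpa [single_dotProduct, mulVec_single] using this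
  have : 0 < ∑ i : Fin n, X i i :=
    Finset.sum_pos (fun i _ => this i) ⟨⟨0, hn⟩, Finset.mem_univ _⟩
  simpa [Matrix.trace, Matrix.diag] using this

lemma fermi_symm {n : ℕ} {X Y : Matrix (Fin n) (Fin n) ℝ}
    (hXs : X.IsSymm) (hYs : Y.IsSymm) :
    (fromBlocks (X * X + Y * Y) Y Y (1 : Matrix (Fin n) (Fin n) ℝ)).IsSymm :=
  Matrix.IsSymm.fromBlocks
    (by rw [Matrix.IsSymm, transpose_add, transpose_mul, transpose_mul, hXs.eq, hYs.eq])
    hYs.eq Matrix.isSymm_one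

lemma ellipsoid_inj {n : ℕ} (hn : 1 ≤ n) {ℏ : ℝ} (hℏ2 : 0 < ℏ)
    {X Y X' Y' : Matrix (Fin n) (Fin n) ℝ}
    (hXs : X.IsSymm) (hYs : Y.IsSymm) (hXs' : X'.IsSymm) (hYs' : Y'.IsSymm)
    (hX : X.PosDef) (hX' : X'.PosDef)
    (h : ∀ z : Fin n ⊕ Fin n → ℝ,
      z ⬝ᵥ (fermiMatrix X Y) *ᵥ z ≤ ℏ * X.trace ↔
      z ⬝ᵥ (fermiMatrix X' Y') *ᵥ z ≤ ℏ * X'.trace) : X = X' ∧ Y = Y' := by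
  have hc : 0 < ℏ * X.trace := mul_pos hℏ2 (trace_pos hn hX)
  have hc' : 0 < ℏ * X'.trace := mul_pos hℏ2 (trace_pos hn hX')
  have main : ∀ (A A' : Matrix (Fin n ⊕ Fin n) (Fin n ⊕ Fin n) ℝ) (d d' : ℝ), 0 < d → 0 < d' →
      (∀ z : Fin n ⊕ Fin n → ℝ, z ≠ 0 → 0 < z ⬝ᵥ A *ᵥ z) →
      (∀ z, z ⬝ᵥ A *ᵥ z ≤ d → z ⬝ᵥ A' *ᵥ z ≤ d') →
      ∀ z, d * (z ⬝ᵥ A' *ᵥ z) ≤ d' * (z ⬝ᵥ A *ᵥ z) := by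
    intro A A' d d' hd hd' hpos himp z
    rcases eq_or_ne z 0 with rfl | hz
    · simp
    · have hq : 0 < z ⬝ᵥ A *ᵥ z := hpos z hz
      set q := z ⬝ᵥ A *ᵥ z
      set t := Real.sqrt (d / q)
      have ht2 : t * t = d / q := Real.mul_self_sqrt (le_of_lt (div_pos hd hq))
      have hscale : ∀ (B : Matrix (Fin n ⊕ Fin n) (Fin n ⊕ Fin n) ℝ),
          (t • z) ⬝ᵥ B *ᵥ (t • z) = (t * t) * (z ⬝ᵥ B *ᵥ z) := by
        intro B
        rw [mulVec_smul, dotProduct_smul, smul_dotProduct]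
        simp [smul_eq_mul]; ring
      have h1 : (t • z) ⬝ᵥ A *ᵥ (t • z) ≤ d := by
        rw [hscale, ht2, div_mul_cancel₀ _ (ne_of_gt hq)]
      have h2 := himp _ h1
      rw [hscale, ht2, div_mul_eq_mul_div, div_le_iff₀ hq] at h2
      linarith
  have e1 := main _ _ _ _ hc hc' (fun z hz => fermi_quad_pos hXs hYs hX hz)
      (fun z => (h z).mp)
  have e2 := main _ _ _ _ hc' hc (fun z hz => fermi_quad_pos hXs' hYs' hX' hz)
      (fun z => (h z).mpr)
  have equad : ∀ z : Fin n ⊕ Fin n → ℝ,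
      z ⬝ᵥ ((ℏ * X.trace) • fermiMatrix X' Y') *ᵥ z
        = z ⬝ᵥ ((ℏ * X'.trace) • fermiMatrix X Y) *ᵥ z := by
    intro z
    rw [smul_mulVec, dotProduct_smul, smul_mulVec, dotProduct_smul]
    exact le_antisymm (e1 z) (e2 z)
  have hsmul_symm : ∀ (r : ℝ) (A : Matrix (Fin n ⊕ Fin n) (Fin n ⊕ Fin n) ℝ),
      A.IsSymm → (r • A).IsSymm := by
    intro r A hA
    rw [Matrix.IsSymm, transpose_smul, hA.eq]
  have hmat := symm_ext (hsmul_symm _ _ (fermi_symm hXs' hYs'))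
      (hsmul_symm _ _ (fermi_symm hXs hYs)) equad
  have hcc : ℏ * X.trace = ℏ * X'.trace := by
    have := congrFun (congrFun hmat (Sum.inr ⟨0, hn⟩)) (Sum.inr ⟨0, hn⟩)
    simpa [fermiMatrix, fromBlocks_apply₂₂, Matrix.smul_apply] using this
  have hMM : fermiMatrix X Y = fermiMatrix X' Y' := by
    rw [hcc] at hmat
    have := smul_right_injective (Matrix (Fin n ⊕ Fin n) (Fin n ⊕ Fin n) ℝ)
      (ne_of_gt (hcc ▸ hc)) hmat
    exact this.symm
  have hY : Y = Y' := by
    ext i j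
    have := congrFun (congrFun hMM (Sum.inl i)) (Sum.inr j)
    simpa [fermiMatrix, fromBlocks_apply₁₂] using this
  have hXX : X * X = X' * X' := by
    have hblock : X * X + Y * Y = X' * X' + Y' * Y' := by
      ext i j
      have := congrFun (congrFun hMM (Sum.inl i)) (Sum.inl j)
      simpa [fermiMatrix, fromBlocks_apply₁₁] using this
    rw [hY] at hblock
    exact add_right_cancel hblock
  refine ⟨?_, hY⟩
  open scoped MatrixOrder in
  rw [← CFC.sqrt_mul_self X hX.posSemidef.nonneg, hXX, CFC.sqrt_mul_self X' hX'.posSemidef.nonneg]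

lemma quadQ_eq_dot {n : ℕ} (A : Matrix (Fin n) (Fin n) ℝ) (x : Fin n → ℝ) :
    (∑ j, ∑ k, A j k * x j * x k) = x ⬝ᵥ A *ᵥ x := by
  simp only [dotProduct, mulVec, Finset.mul_sum]
  refine Finset.sum_congr rfl fun j _ => Finset.sum_congr rfl fun k _ => by ring

lemma exponent_split {n : ℕ} (X Y : Matrix (Fin n) (Fin n) ℝ) (x : Fin n → ℝ) :
    (∑ j, ∑ k, ((X j k : ℂ) + Complex.I * (Y j k : ℂ)) * (x j : ℂ) * (x k : ℂ))
      = ((x ⬝ᵥ X *ᵥ x : ℝ) : ℂ) + Complex.I * ((x ⬝ᵥ Y *ᵥ x : ℝ) : ℂ) := by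
  rw [← quadQ_eq_dot, ← quadQ_eq_dot]
  push_cast
  rw [Finset.mul_sum, ← Finset.sum_add_distrib]
  refine Finset.sum_congr rfl fun j _ => ?_
  rw [Finset.mul_sum, ← Finset.sum_add_distrib]
  refine Finset.sum_congr rfl fun k _ => by ring

lemma exponent_form {n : ℕ} {ℏ : ℝ} (hℏ : 0 < ℏ) (X Y : Matrix (Fin n) (Fin n) ℝ)
    (x : Fin n → ℝ) :
    (-(1 / (2 * (ℏ : ℂ))) *
        ∑ j, ∑ k, ((X j k : ℂ) + Complex.I * (Y j k : ℂ)) * (x j : ℂ) * (x k : ℂ))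
      = ((-(x ⬝ᵥ X *ᵥ x) / (2 * ℏ) : ℝ) : ℂ)
        + ((-(x ⬝ᵥ Y *ᵥ x) / (2 * ℏ) : ℝ) : ℂ) * Complex.I := by
  rw [exponent_split]
  have hne : ((ℏ : ℝ) : ℂ) ≠ 0 := Complex.ofReal_ne_zero.mpr (ne_of_gt hℏ)
  push_cast
  field_simp
  ring

lemma dot_scale {ι : Type*} [Fintype ι] (A : Matrix ι ι ℝ) (t : ℝ) (x : ι → ℝ) :
    (t • x) ⬝ᵥ A *ᵥ (t • x) = (t * t) * (x ⬝ᵥ A *ᵥ x) := by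
  rw [mulVec_smul, dotProduct_smul, smul_dotProduct]
  simp [smul_eq_mul]; ring

lemma state_inj {n : ℕ} {ℏ : ℝ} (hℏ : 0 < ℏ)
    {X Y X' Y' : Matrix (Fin n) (Fin n) ℝ}
    (hXs : X.IsSymm) (hYs : Y.IsSymm) (hXs' : X'.IsSymm) (hYs' : Y'.IsSymm)
    (hX : X.PosDef) (hX' : X'.PosDef)
    (h : gaussianState n ℏ X Y = gaussianState n ℏ X' Y') : X = X' ∧ Y = Y' := by
  have hπℏ : 0 < (Real.pi * ℏ) ^ n := pow_pos (mul_pos Real.pi_pos hℏ) n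
  have hamp : 0 < (X.det / (Real.pi * ℏ) ^ n) ^ ((1 : ℝ) / 4) :=
    Real.rpow_pos_of_pos (div_pos hX.det_pos hπℏ) _
  have hat0 : ((X.det / (Real.pi * ℏ) ^ n) ^ ((1 : ℝ) / 4) : ℝ)
      = (X'.det / (Real.pi * ℏ) ^ n) ^ ((1 : ℝ) / 4) := by
    have := congrFun h 0
    simp only [gaussianState] at this
    norm_num at this
    exact_mod_cast this
  have hexp : ∀ x : Fin n → ℝ,
      Complex.exp (((-(x ⬝ᵥ X *ᵥ x) / (2 * ℏ) : ℝ) : ℂ)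
          + ((-(x ⬝ᵥ Y *ᵥ x) / (2 * ℏ) : ℝ) : ℂ) * Complex.I)
        = Complex.exp (((-(x ⬝ᵥ X' *ᵥ x) / (2 * ℏ) : ℝ) : ℂ)
          + ((-(x ⬝ᵥ Y' *ᵥ x) / (2 * ℏ) : ℝ) : ℂ) * Complex.I) := by
    intro x
    have hx := congrFun h x
    rw [gaussianState, gaussianState, exponent_form hℏ, exponent_form hℏ, hat0] at hx
    exact mul_left_cancel₀
      (Complex.ofReal_ne_zero.mpr (ne_of_gt (hat0 ▸ hamp))) hx
  have key : ∀ x : Fin n → ℝ, x ⬝ᵥ X *ᵥ x = x ⬝ᵥ X' *ᵥ x ∧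
      ∃ k : ℤ, x ⬝ᵥ Y *ᵥ x - x ⬝ᵥ Y' *ᵥ x = k * (4 * Real.pi * ℏ) := by
    intro x
    obtain ⟨k, hk⟩ := Complex.exp_eq_exp_iff_exists_int.mp (hexp x)
    set a := -(x ⬝ᵥ X *ᵥ x) / (2 * ℏ) with ha
    set b := -(x ⬝ᵥ Y *ᵥ x) / (2 * ℏ) with hb
    set a' := -(x ⬝ᵥ X' *ᵥ x) / (2 * ℏ) with ha'
    set b' := -(x ⬝ᵥ Y' *ᵥ x) / (2 * ℏ) with hb'
    have hre := congrArg Complex.re hk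
    have him := congrArg Complex.im hk
    simp at hre him
    rw [ha, ha'] at hre
    rw [hb, hb'] at him
    constructor
    · field_simp at hre
      linarith
    · refine ⟨-k, ?_⟩
      have hπ := Real.pi_pos
      field_simp at him
      push_cast
      nlinarith [him]
  have hXeq : X = X' := symm_ext hXs hXs' fun z => (key z).1
  refine ⟨hXeq, symm_ext hYs hYs' fun x => ?_⟩
  by_contra hne
  set c := x ⬝ᵥ Y *ᵥ x - x ⬝ᵥ Y' *ᵥ x with hc
  have hcne : c ≠ 0 := sub_ne_zero.mpr hne
  have hπ := Real.pi_pos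
  set t := Real.sqrt (2 * Real.pi * ℏ / |c|) with ht
  have hdivpos : 0 < 2 * Real.pi * ℏ / |c| :=
    div_pos (by positivity) (abs_pos.mpr hcne)
  have ht2 : t * t = 2 * Real.pi * ℏ / |c| := Real.mul_self_sqrt (le_of_lt hdivpos)
  obtain ⟨k, hk⟩ := (key (t • x)).2
  rw [dot_scale, dot_scale, ← mul_sub, ← hc, ht2] at hk
  have habs : |2 * Real.pi * ℏ / |c| * c| = 2 * Real.pi * ℏ := by
    rw [abs_mul, abs_div, abs_abs, abs_of_pos (show (0:ℝ) < 2 * Real.pi * ℏ by positivity),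
      div_mul_cancel₀ _ (abs_ne_zero.mpr hcne)]
  rw [hk] at habs
  have hk0 : k ≠ 0 := by
    intro h0
    rw [h0] at hk
    norm_num at hk
    have := mul_ne_zero (ne_of_gt hdivpos) hcne
    rcases hk with hk | hk
    · exact absurd hk (ne_of_gt hℏ)
    · exact hcne hk
  have hk1 : (1 : ℝ) ≤ |(k : ℝ)| := by
    rw [← Int.cast_abs]
    exact_mod_cast Int.one_le_abs hk0
  rw [abs_mul, abs_of_pos (show (0:ℝ) < 4 * Real.pi * ℏ by positivity)] at habs
  have h4 : (1:ℝ) * (4 * Real.pi * ℏ) ≤ |(k:ℝ)| * (4 * Real.pi * ℏ) :=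
    mul_le_mul_of_nonneg_right hk1 (by positivity)
  nlinarith [mul_pos hπ hℏ, h4, habs]

open Classical in
noncomputable def PhiMap (n : ℕ) (ℏ : ℝ) (ψ : (Fin n → ℝ) → ℂ) : Set (Fin n ⊕ Fin n → ℝ) :=
  if h : ∃ X Y : Matrix (Fin n) (Fin n) ℝ,
      X.IsSymm ∧ Y.IsSymm ∧ X.PosDef ∧ ψ = gaussianState n ℏ X Y
  then fermiEllipsoid n ℏ h.choose h.choose_spec.choose else ∅

/-- The assignment of Fermi ellipsoids to centered generalized coherent states is injective
(`Ω_{XY} = Ω_{X′Y′}` forces `X = X′` and `Y = Y′`), and consequently `ψ_{X,Y} ↦ Ω_{XY}` is a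
bijection between centered generalized coherent states and Fermi ellipsoids. -/
theorem fermi_ellipsoid_bijection (n : ℕ) (hn : 1 ≤ n) (ℏ : ℝ) (hℏ : 0 < ℏ) :
    (∀ X Y X' Y' : Matrix (Fin n) (Fin n) ℝ,
        X.IsSymm → Y.IsSymm → X'.IsSymm → Y'.IsSymm → X.PosDef → X'.PosDef →
        fermiEllipsoid n ℏ X Y = fermiEllipsoid n ℏ X' Y' → X = X' ∧ Y = Y') ∧
      ∃ Φ : ((Fin n → ℝ) → ℂ) → Set (Fin n ⊕ Fin n → ℝ),
        (∀ X Y : Matrix (Fin n) (Fin n) ℝ, X.IsSymm → Y.IsSymm → X.PosDef →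
          Φ (gaussianState n ℏ X Y) = fermiEllipsoid n ℏ X Y) ∧
        Set.BijOn Φ
          {ψ | ∃ X Y : Matrix (Fin n) (Fin n) ℝ,
            X.IsSymm ∧ Y.IsSymm ∧ X.PosDef ∧ ψ = gaussianState n ℏ X Y}
          {Ω | ∃ X Y : Matrix (Fin n) (Fin n) ℝ,
            X.IsSymm ∧ Y.IsSymm ∧ X.PosDef ∧ Ω = fermiEllipsoid n ℏ X Y} := by
  classical
  have inj1 : ∀ X Y X' Y' : Matrix (Fin n) (Fin n) ℝ,
      X.IsSymm → Y.IsSymm → X'.IsSymm → Y'.IsSymm → X.PosDef → X'.PosDef →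
      fermiEllipsoid n ℏ X Y = fermiEllipsoid n ℏ X' Y' → X = X' ∧ Y = Y' := by
    intro X Y X' Y' hXs hYs hXs' hYs' hX hX' hset
    refine ellipsoid_inj hn hℏ hXs hYs hXs' hYs' hX hX' fun z => ?_
    have := Set.ext_iff.mp hset z
    simpa [fermiEllipsoid] using this
  have hΦ : ∀ X Y : Matrix (Fin n) (Fin n) ℝ, X.IsSymm → Y.IsSymm → X.PosDef →
      PhiMap n ℏ (gaussianState n ℏ X Y) = fermiEllipsoid n ℏ X Y := by
    intro X Y hXs hYs hX
    have hmem : ∃ X' Y' : Matrix (Fin n) (Fin n) ℝ,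
        X'.IsSymm ∧ Y'.IsSymm ∧ X'.PosDef ∧
          gaussianState n ℏ X Y = gaussianState n ℏ X' Y' :=
      ⟨X, Y, hXs, hYs, hX, rfl⟩
    unfold PhiMap
    rw [dif_pos hmem]
    obtain ⟨hXs0, hYs0, hX0, heq⟩ := hmem.choose_spec.choose_spec
    obtain ⟨e1, e2⟩ := state_inj hℏ hXs hYs hXs0 hYs0 hX hX0 heq
    exact congrArg₂ (fermiEllipsoid n ℏ) e1.symm e2.symm
  refine ⟨inj1, PhiMap n ℏ, hΦ, ?_, ?_, ?_⟩
  · rintro ψ ⟨X, Y, hXs, hYs, hX, rfl⟩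
    rw [hΦ X Y hXs hYs hX]
    exact ⟨X, Y, hXs, hYs, hX, rfl⟩
  · rintro ψ₁ ⟨X₁, Y₁, hXs₁, hYs₁, hX₁, rfl⟩ ψ₂ ⟨X₂, Y₂, hXs₂, hYs₂, hX₂, rfl⟩ heq
    rw [hΦ X₁ Y₁ hXs₁ hYs₁ hX₁, hΦ X₂ Y₂ hXs₂ hYs₂ hX₂] at heq
    obtain ⟨e1, e2⟩ := inj1 X₁ Y₁ X₂ Y₂ hXs₁ hYs₁ hXs₂ hYs₂ hX₁ hX₂ heq
    rw [e1, e2]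
  · rintro Ω ⟨X, Y, hXs, hYs, hX, rfl⟩
    exact ⟨gaussianState n ℏ X Y, ⟨X, Y, hXs, hYs, hX, rfl⟩, hΦ X Y hXs hYs hX⟩
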